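/- Let U be a finite set of UEs and B a finite set of BSs, with path-loss coefficients q_{lk} > 0 for each BS l and UE k, transmit power P > 0 and noise power N0 > 0. Let (B_m, U_m) and (B_n, U_n) be two subnetworks with B_m, B_n ⊆ B disjoint and U_m, U_n ⊆ U disjoint. Then the capacity of the merged subnetwork satisfies C_sub(B_m ∪ B_n, U_m ∪ U_n) ≥ C_sub(B_m, U_m) + C_sub(B_n, U_n). -/
import Mathlib


open Finset

/-- Ergodic capacity of the subnetwork consisting of BSs `Bm` and UEs `Um`,
within the whole network whose UE set is `U`:
`C_sub(B_m, U_m) = Σ_{l ∈ B_m} log₂(1 + P·(Σ_{k ∈ U_m} q_{lk}²)/(N0 + P·Σ_{k ∈ U∖U_m} q_{lk}²))`. -/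
noncomputable def Csub {ιU ιB : Type*} [DecidableEq ιU]
    (U : Finset ιU) (q : ιB → ιU → ℝ) (P N0 : ℝ)
    (Bm : Finset ιB) (Um : Finset ιU) : ℝ :=
  ∑ l ∈ Bm, Real.logb 2
    (1 + P * (∑ k ∈ Um, q l k ^ 2) / (N0 + P * ∑ k ∈ U \ Um, q l k ^ 2))

/-- Each per-BS term is monotone in the UE set of the subnetwork. -/
lemma term_mono {ιU ιB : Type*} [DecidableEq ιU]
    (U : Finset ιU) (q : ιB → ιU → ℝ) (P N0 : ℝ) (hP : 0 < P) (hN0 : 0 < N0)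
    (Um Um' : Finset ιU) (h : Um ⊆ Um') (l : ιB) :
    Real.logb 2
      (1 + P * (∑ k ∈ Um, q l k ^ 2) / (N0 + P * ∑ k ∈ U \ Um, q l k ^ 2)) ≤
    Real.logb 2
      (1 + P * (∑ k ∈ Um', q l k ^ 2) / (N0 + P * ∑ k ∈ U \ Um', q l k ^ 2)) := by
  have hnum : (∑ k ∈ Um, q l k ^ 2) ≤ ∑ k ∈ Um', q l k ^ 2 :=
    Finset.sum_le_sum_of_subset_of_nonneg h (fun k _ _ => sq_nonneg _)
  have hden : (∑ k ∈ U \ Um', q l k ^ 2) ≤ ∑ k ∈ U \ Um, q l k ^ 2 :=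
    Finset.sum_le_sum_of_subset_of_nonneg (Finset.sdiff_subset_sdiff le_rfl h)
      (fun k _ _ => sq_nonneg _)
  have hden0 : (0:ℝ) < N0 + P * ∑ k ∈ U \ Um', q l k ^ 2 := by
    have : (0:ℝ) ≤ ∑ k ∈ U \ Um', q l k ^ 2 :=
      Finset.sum_nonneg fun k _ => sq_nonneg _
    nlinarith
  have hnum0 : (0:ℝ) ≤ P * ∑ k ∈ Um, q l k ^ 2 := by
    have : (0:ℝ) ≤ ∑ k ∈ Um, q l k ^ 2 :=
      Finset.sum_nonneg fun k _ => sq_nonneg _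
    positivity
  have hfrac : P * (∑ k ∈ Um, q l k ^ 2) / (N0 + P * ∑ k ∈ U \ Um, q l k ^ 2) ≤
      P * (∑ k ∈ Um', q l k ^ 2) / (N0 + P * ∑ k ∈ U \ Um', q l k ^ 2) := by
    apply div_le_div₀ (by nlinarith) (by nlinarith) hden0 (by nlinarith)
  have harg0 : (0:ℝ) <
      1 + P * (∑ k ∈ Um, q l k ^ 2) / (N0 + P * ∑ k ∈ U \ Um, q l k ^ 2) := by
    have hd : (0:ℝ) < N0 + P * ∑ k ∈ U \ Um, q l k ^ 2 := by nlinarith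
    have := div_nonneg hnum0 hd.le
    linarith
  exact Real.logb_le_logb_of_le (by norm_num) harg0 (by linarith)

/-- Superadditivity of subnetwork capacity under merging (inequality (46)). -/
theorem merge_superadditive {ιU ιB : Type*} [DecidableEq ιU] [DecidableEq ιB]
    (U : Finset ιU) (B : Finset ιB) (q : ιB → ιU → ℝ) (hq : ∀ l k, 0 < q l k)
    (P N0 : ℝ) (hP : 0 < P) (hN0 : 0 < N0)
    (Bm Bn : Finset ιB) (Um Un : Finset ιU)
    (hBm : Bm ⊆ B) (hBn : Bn ⊆ B) (hUm : Um ⊆ U) (hUn : Un ⊆ U)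
    (hBdisj : Disjoint Bm Bn) (hUdisj : Disjoint Um Un) :
    Csub U q P N0 Bm Um + Csub U q P N0 Bn Un ≤
      Csub U q P N0 (Bm ∪ Bn) (Um ∪ Un) := by
  unfold Csub
  rw [Finset.sum_union hBdisj]
  refine add_le_add (Finset.sum_le_sum fun l _ => ?_) (Finset.sum_le_sum fun l _ => ?_)
  · exact term_mono U q P N0 hP hN0 Um (Um ∪ Un) Finset.subset_union_left l
  · exact term_mono U q P N0 hP hN0 Un (Um ∪ Un) Finset.subset_union_right l
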